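/- arXiv:2001.06633 — 5 statements merged into one kernel-verified Lean document; each statement's English description precedes it below -/
import Mathlib

section
/- Let (α_j)_{j≥1} and (β_j)_{j≥1} be nonnegative real sequences and L the strictly lower-triangular Toeplitz operator defined by (Lα)_i = ∑_{j=1}^{i−1} c_{i−j} α_j for a nonnegative summable sequence (c_k)_{k≥1} with ∑_k c_k < 1. If α ≤ Lα + β pointwise and α is bounded, then ∑_j α_j ≤ (∑_j β_j)/(1 − ∑_k c_k). -/
/-- If a bounded nonnegative sequence `α` (indexed from 1, `α 0 = 0`)
satisfies `α ≤ Lα + β` pointwise, where `L` is the strictly lower-triangular Toeplitz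
operator with nonnegative summable symbol `c` with `∑ c < 1`, then
`∑ α ≤ (∑ β)/(1 − ∑ c)`. -/
theorem stmt_3 (α β c : ℕ → ℝ)
    (hα0 : α 0 = 0) (hβ0 : β 0 = 0) (hc0 : c 0 = 0)
    (hαnn : ∀ i, 0 ≤ α i) (hβnn : ∀ i, 0 ≤ β i) (hcnn : ∀ i, 0 ≤ c i)
    (hcsum : Summable c) (hc1 : ∑' k, c k < 1)
    (hβsum : Summable β)
    (hbdd : ∃ M, ∀ i, α i ≤ M)
    (hrec : ∀ i, α i ≤ (∑ j ∈ Finset.range i, c (i - j) * α j) + β i) :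
    Summable α ∧ ∑' j, α j ≤ (∑' j, β j) / (1 - ∑' k, c k) := by
  set C := ∑' k, c k with hC
  set B := ∑' j, β j with hB
  have hC0 : 0 ≤ C := tsum_nonneg hcnn
  have hB0 : 0 ≤ B := tsum_nonneg hβnn
  have h1C : 0 < 1 - C := by linarith
  have key : ∀ n, ∑ i ∈ Finset.range n, α i ≤ B / (1 - C) := by
    intro n
    have hswap : ∑ i ∈ Finset.range n, ∑ j ∈ Finset.range i, c (i - j) * α j
        = ∑ j ∈ Finset.range n, ∑ i ∈ Finset.Ioo j n, c (i - j) * α j := by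
      apply Finset.sum_comm'
      intro i j
      simp only [Finset.mem_range, Finset.mem_Ioo]
      omega
    have hinner : ∀ j, ∑ i ∈ Finset.Ioo j n, c (i - j) * α j ≤ C * α j := by
      intro j
      rw [← Finset.sum_mul]
      have hcsumle : ∑ i ∈ Finset.Ioo j n, c (i - j) ≤ C := by
        have himg : ∑ i ∈ Finset.Ioo j n, c (i - j)
            = ∑ k ∈ (Finset.Ioo j n).image (· - j), c k := by
          rw [Finset.sum_image]
          intro a ha b hb hab
          simp only [Finset.mem_coe, Finset.coe_Ioo, Set.mem_Ioo, Finset.mem_Ioo] at ha hb hab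
          omega
        rw [himg]
        exact Summable.sum_le_tsum _ (fun k _ => hcnn k) hcsum
      exact mul_le_mul_of_nonneg_right hcsumle (hαnn j)
    have hS : ∑ i ∈ Finset.range n, α i
        ≤ C * (∑ j ∈ Finset.range n, α j) + B := by
      calc ∑ i ∈ Finset.range n, α i
          ≤ ∑ i ∈ Finset.range n, ((∑ j ∈ Finset.range i, c (i - j) * α j) + β i) :=
            Finset.sum_le_sum (fun i _ => hrec i)
        _ = (∑ i ∈ Finset.range n, ∑ j ∈ Finset.range i, c (i - j) * α j)
            + ∑ i ∈ Finset.range n, β i := Finset.sum_add_distrib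
        _ ≤ (∑ j ∈ Finset.range n, C * α j) + B := by
            apply add_le_add
            · rw [hswap]; exact Finset.sum_le_sum (fun j _ => hinner j)
            · exact Summable.sum_le_tsum _ (fun k _ => hβnn k) hβsum
        _ = C * (∑ j ∈ Finset.range n, α j) + B := by rw [Finset.mul_sum]
    rw [le_div_iff₀ h1C]
    nlinarith [hS]
  have hsum : Summable α := summable_of_sum_range_le hαnn key
  exact ⟨hsum, Summable.tsum_le_of_sum_range_le hsum key⟩
end

section
/- Let (Var_k)_{k≥0} be a sequence in [0,1) with Γ := ∏_{k=0}^∞(1 − Var_k) > 0, and let γ_k be defined by γ_1 = Var_0, γ_k = Var_{k−1} ∏_{i=0}^{k−2}(1 − Var_i). If a bounded nonnegative sequence (α_j)_{j≥1} satisfies the renewal inequality α_j ≤ γ_j + ∑_{k=1}^{j−1} γ_{j−k} α_k for all j ≥ 1, then ∑_{j=1}^∞ α_j ≤ (1 − Γ)/Γ. -/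
/-- Renewal inequality: if `Γ = ∏(1 − Var_k) > 0`, `γ` is the associated
inter-arrival distribution, and a bounded nonnegative sequence `α` (indexed from 1)
satisfies `α_j ≤ γ_j + ∑_{k=1}^{j−1} γ_{j−k} α_k`, then `∑ α ≤ (1 − Γ)/Γ`. -/
theorem stmt_5 (Var : ℕ → ℝ) (hVar : ∀ k, Var k ∈ Set.Ico (0 : ℝ) 1)
    (Γ : ℝ) (hΓpos : 0 < Γ)
    (hΓ : Filter.Tendsto (fun n => ∏ k ∈ Finset.range n, (1 - Var k))
      Filter.atTop (nhds Γ))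
    (γ : ℕ → ℝ)
    (hγ : ∀ k, 1 ≤ k → γ k = Var (k - 1) * ∏ i ∈ Finset.range (k - 1), (1 - Var i))
    (α : ℕ → ℝ) (hα0 : α 0 = 0) (hαnn : ∀ j, 0 ≤ α j) (hbdd : ∃ M, ∀ j, α j ≤ M)
    (hrec : ∀ j, 1 ≤ j → α j ≤ γ j + ∑ k ∈ Finset.Ico 1 j, γ (j - k) * α k) :
    Summable α ∧ ∑' j, α j ≤ (1 - Γ) / Γ := by
  set P : ℕ → ℝ := fun n => ∏ k ∈ Finset.range n, (1 - Var k) with hP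
  -- facts about factors
  have hfac : ∀ k, 0 < 1 - Var k ∧ 1 - Var k ≤ 1 := fun k => by
    have := hVar k; constructor <;> [linarith [this.2]; linarith [this.1]]
  have hPpos : ∀ n, 0 < P n := fun n =>
    Finset.prod_pos fun k _ => (hfac k).1
  have hPanti : Antitone P := by
    apply antitone_nat_of_succ_le
    intro n
    have : P (n + 1) = P n * (1 - Var n) := Finset.prod_range_succ _ _
    rw [this]
    calc P n * (1 - Var n) ≤ P n * 1 := by
          apply mul_le_mul_of_nonneg_left (hfac n).2 (hPpos n).le
      _ = P n := mul_one _
  have hPΓ : ∀ n, Γ ≤ P n := by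
    intro n
    refine le_of_tendsto hΓ ?_
    filter_upwards [Filter.eventually_ge_atTop n] with m hm
    exact hPanti hm
  -- γ nonneg for k ≥ 1
  have hγnn : ∀ k, 1 ≤ k → 0 ≤ γ k := by
    intro k hk
    rw [hγ k hk]
    exact mul_nonneg (hVar _).1 (hPpos _).le
  -- telescoping: ∑_{k=1}^{n} γ k = 1 - P n
  have htel : ∀ n, ∑ k ∈ Finset.Ico 1 (n + 1), γ k = 1 - P n := by
    intro n
    induction n with
    | zero => simp [hP]
    | succ n ih =>
      rw [Finset.sum_Ico_succ_top (by omega), ih, hγ (n + 1) (by omega)]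
      simp only [Nat.add_sub_cancel]
      have : P (n + 1) = P n * (1 - Var n) := Finset.prod_range_succ _ _
      rw [this]; ring
  have hγsum : ∀ n, ∑ k ∈ Finset.Ico 1 n, γ k ≤ 1 - Γ := by
    intro n
    cases n with
    | zero =>
      have h0 := hPΓ 0
      simp [hP] at h0
      simp
      linarith
    | succ n => rw [htel n]; linarith [hPΓ n]
  -- partial sums of α over Ico 1 N
  have key : ∀ N, ∑ j ∈ Finset.Ico 1 N, α j ≤ (1 - Γ) / Γ := by
    intro N
    set A := ∑ j ∈ Finset.Ico 1 N, α j with hA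
    have hAnn : 0 ≤ A := Finset.sum_nonneg fun j _ => hαnn j
    have hΓ1 : 1 - Γ < 1 := by linarith
    have step : A ≤ (1 - Γ) + (1 - Γ) * A := by
      calc A ≤ ∑ j ∈ Finset.Ico 1 N, (γ j + ∑ k ∈ Finset.Ico 1 j, γ (j - k) * α k) := by
            apply Finset.sum_le_sum
            intro j hj
            exact hrec j (Finset.mem_Ico.mp hj).1
        _ = (∑ j ∈ Finset.Ico 1 N, γ j)
            + ∑ j ∈ Finset.Ico 1 N, ∑ k ∈ Finset.Ico 1 j, γ (j - k) * α k := by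
            rw [Finset.sum_add_distrib]
        _ ≤ (1 - Γ) + ∑ k ∈ Finset.Ico 1 N, ∑ j ∈ Finset.Ico (k + 1) N, γ (j - k) * α k := by
            rw [Finset.sum_Ico_Ico_comm' 1 N (fun k j => γ (j - k) * α k)]
            exact add_le_add_left (hγsum N) _
        _ ≤ (1 - Γ) + ∑ k ∈ Finset.Ico 1 N, (1 - Γ) * α k := by
            apply add_le_add_right
            apply Finset.sum_le_sum
            intro k hk
            rw [← Finset.sum_mul]
            apply mul_le_mul_of_nonneg_right _ (hαnn k)
            -- ∑_{j ∈ Ico (k+1) N} γ (j - k) ≤ 1 - Γ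
            have : ∑ j ∈ Finset.Ico (k + 1) N, γ (j - k)
                = ∑ m ∈ Finset.Ico 1 (N - k), γ m := by
              rcases le_or_gt (k + 1) N with h | h
              · rw [Finset.sum_Ico_eq_sum_range, Finset.sum_Ico_eq_sum_range]
                apply Finset.sum_congr (by congr 1 <;> omega)
                intro i _
                congr 1
                omega
              · rw [Finset.Ico_eq_empty (by omega), Finset.Ico_eq_empty (by omega)]
                simp
            rw [this]
            exact hγsum _
        _ = (1 - Γ) + (1 - Γ) * A := by rw [← Finset.mul_sum]
    -- from A ≤ (1-Γ) + (1-Γ)A deduce A ≤ (1-Γ)/Γ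
    rw [le_div_iff₀ hΓpos]
    nlinarith [step, hAnn]
  have keyR : ∀ N, ∑ j ∈ Finset.range N, α j ≤ (1 - Γ) / Γ := by
    intro N
    cases N with
    | zero =>
      have h0 := hPΓ 0
      simp [hP] at h0
      simp
      apply div_nonneg <;> linarith
    | succ n =>
      have : ∑ j ∈ Finset.range (n + 1), α j = ∑ j ∈ Finset.Ico 1 (n + 1), α j := by
        rw [Finset.range_eq_Ico, Finset.sum_eq_sum_Ico_succ_bot (by omega), hα0, zero_add]
      rw [this]; exact key _
  have hsummable : Summable α :=
    summable_of_sum_range_le (fun j => hαnn j) keyR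
  exact ⟨hsummable, Summable.tsum_le_of_sum_range_le hsummable keyR⟩
end

section
/- Let μ be a probability measure on A^{ℕ} (A countable discrete) satisfying a Gaussian concentration bound with constant C > 0 for all local functions with finite oscillations. Then the same bound E_μ[e^{f − E_μ[f]}] ≤ e^{C ‖δ(f)‖²₂} holds for every bounded uniformly continuous f : A^{ℕ} → ℝ with ∑_{j=0}^∞ δ_j(f)² < ∞, with the same constant C. -/
open MeasureTheory

/-- Oscillation of `f` in the `j`-th coordinate. -/
noncomputable def osc8 {A : Type*} (f : (ℕ → A) → ℝ) (j : ℕ) : ℝ :=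
  sSup {t | ∃ (ω : ℕ → A) (a b : A),
    t = |f (Function.update ω j a) - f (Function.update ω j b)|}

/-- If `μ` satisfies a Gaussian concentration bound with constant `C` for all
local functions with finite coordinate oscillations, then the same bound holds for every
bounded uniformly continuous `f` (i.e. `var_n(f) → 0`) with `∑_j δ_j(f)² < ∞`,
with the same constant. -/
theorem stmt_8 {A : Type*} [Countable A] [MeasurableSpace A] [MeasurableSingletonClass A]
    (μ : Measure (ℕ → A)) [IsProbabilityMeasure μ] (C : ℝ) (hC : 0 < C)
    (hGCB : ∀ (n : ℕ) (f : (ℕ → A) → ℝ), Measurable f →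
      (∀ ω ω' : ℕ → A, (∀ i, i ≤ n → ω i = ω' i) → f ω = f ω') →
      (∀ j, BddAbove {t | ∃ (ω : ℕ → A) (a b : A),
        t = |f (Function.update ω j a) - f (Function.update ω j b)|}) →
      ∫ ω, Real.exp (f ω - ∫ x, f x ∂μ) ∂μ ≤ Real.exp (C * ∑' j, (osc8 f j) ^ 2))
    (f : (ℕ → A) → ℝ) (hfm : Measurable f)
    (M : ℝ) (hbd : ∀ ω, |f ω| ≤ M)
    (huc : Filter.Tendsto
      (fun n => sSup {t | ∃ ω ω' : ℕ → A, (∀ i, i ≤ n → ω i = ω' i) ∧ t = |f ω - f ω'|})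
      Filter.atTop (nhds 0))
    (hbdd : ∀ j, BddAbove {t | ∃ (ω : ℕ → A) (a b : A),
      t = |f (Function.update ω j a) - f (Function.update ω j b)|})
    (hsq : Summable fun j => (osc8 f j) ^ 2) :
    ∫ ω, Real.exp (f ω - ∫ x, f x ∂μ) ∂μ ≤ Real.exp (C * ∑' j, (osc8 f j) ^ 2) := by
  classical
  -- A is nonempty
  have hA : Nonempty A := by
    by_contra h
    have hE : IsEmpty A := not_nonempty_iff.mp h
    have hE2 : IsEmpty (ℕ → A) := ⟨fun g => hE.false (g 0)⟩
    have h1 := measure_univ (μ := μ)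
    rw [Set.univ_eq_empty_iff.mpr hE2, measure_empty] at h1
    exact zero_ne_one h1
  obtain ⟨η⟩ := hA
  set S : ℝ := ∑' j, (osc8 f j) ^ 2 with hS
  set V : ℕ → ℝ := fun n =>
    sSup {t | ∃ ω ω' : ℕ → A, (∀ i, i ≤ n → ω i = ω' i) ∧ t = |f ω - f ω'|} with hV
  -- the approximating maps
  set g : ℕ → (ℕ → A) → (ℕ → A) := fun n ω i => if i ≤ n then ω i else η with hg
  have hgmeas : ∀ n, Measurable (g n) := by
    intro n
    apply measurable_pi_lambda
    intro i
    by_cases h : i ≤ n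
    · simpa [hg, h] using measurable_pi_apply i
    · simpa [hg, h] using measurable_const
  have hgagree : ∀ n ω, ∀ i, i ≤ n → g n ω i = ω i := by
    intro n ω i hi; simp [hg, hi]
  -- boundedness / membership facts about V
  have hVbdd : ∀ n, BddAbove {t | ∃ ω ω' : ℕ → A,
      (∀ i, i ≤ n → ω i = ω' i) ∧ t = |f ω - f ω'|} := by
    intro n
    refine ⟨2 * M, ?_⟩
    rintro t ⟨ω, ω', -, rfl⟩
    calc |f ω - f ω'| ≤ |f ω| + |f ω'| := abs_sub _ _
      _ ≤ M + M := add_le_add (hbd ω) (hbd ω')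
      _ = 2 * M := by ring
  have hVmem : ∀ n ω, |f ω - f (g n ω)| ≤ V n := by
    intro n ω
    exact le_csSup (hVbdd n) ⟨ω, g n ω, fun i hi => (hgagree n ω i hi).symm, rfl⟩
  -- integrability of bounded measurable functions
  have intbd : ∀ (h : (ℕ → A) → ℝ), Measurable h → ∀ K : ℝ, (∀ ω, |h ω| ≤ K) →
      Integrable h μ := by
    intro h hm K hK
    exact (integrable_const K).mono' hm.aestronglyMeasurable
      (Filter.Eventually.of_forall fun ω => by simpa using hK ω)
  have hfint : Integrable f μ := intbd f hfm M hbd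
  -- osc8 is nonnegative
  have hosc_nonneg : ∀ (F : (ℕ → A) → ℝ), (∀ j, BddAbove {t | ∃ (ω : ℕ → A) (a b : A),
      t = |F (Function.update ω j a) - F (Function.update ω j b)|}) →
      ∀ j, 0 ≤ osc8 F j := by
    intro F hF j
    refine le_csSup (hF j) ⟨fun _ => η, η, η, by simp⟩
  -- key per-n bound
  have key : ∀ n : ℕ,
      ∫ ω, Real.exp (f ω - ∫ x, f x ∂μ) ∂μ ≤ Real.exp (2 * V n + C * S) := by
    intro n
    set fn : (ℕ → A) → ℝ := fun ω => f (g n ω) with hfn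
    have hfnm : Measurable fn := hfm.comp (hgmeas n)
    have hfnbd : ∀ ω, |fn ω| ≤ M := fun ω => hbd _
    have hfnint : Integrable fn μ := intbd fn hfnm M hfnbd
    have hfnloc : ∀ ω ω' : ℕ → A, (∀ i, i ≤ n → ω i = ω' i) → fn ω = fn ω' := by
      intro ω ω' h
      have : g n ω = g n ω' := by
        funext i
        by_cases hi : i ≤ n <;> simp [hg, hi, h i]
      simp [hfn, this]
    -- osc sets of fn
    have hosc_sub : ∀ j, {t | ∃ (ω : ℕ → A) (a b : A),
        t = |fn (Function.update ω j a) - fn (Function.update ω j b)|} ⊆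
        insert (0 : ℝ) {t | ∃ (ω : ℕ → A) (a b : A),
        t = |f (Function.update ω j a) - f (Function.update ω j b)|} := by
      intro j t ht
      obtain ⟨ω, a, b, rfl⟩ := ht
      by_cases hj : j ≤ n
      · right
        refine ⟨g n ω, a, b, ?_⟩
        have h1 : ∀ c : A, g n (Function.update ω j c) = Function.update (g n ω) j c := by
          intro c
          funext i
          by_cases hi : i ≤ n
          · by_cases hij : i = j
            · subst hij
              simp [hg, hi, Function.update]
            · simp [hg, hi, Function.update, hij]
          · have : i ≠ j := fun h => hi (h ▸ hj)
            simp [hg, hi, Function.update, this]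
        simp [hfn, h1]
      · left
        have h2 : ∀ c : A, g n (Function.update ω j c) = g n ω := by
          intro c
          funext i
          by_cases hi : i ≤ n
          · have : i ≠ j := fun h => hj (h ▸ hi)
            simp [hg, hi, Function.update, this]
          · simp [hg, hi]
        simp [hfn, h2]
    have hfnbdd : ∀ j, BddAbove {t | ∃ (ω : ℕ → A) (a b : A),
        t = |fn (Function.update ω j a) - fn (Function.update ω j b)|} := by
      intro j
      exact (((hbdd j).insert 0).mono (hosc_sub j))
    have hosc_le : ∀ j, osc8 fn j ≤ osc8 f j := by
      intro j
      refine csSup_le ⟨_, ⟨fun _ => η, η, η, rfl⟩⟩ ?_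
      intro t ht
      rcases hosc_sub j ht with h0 | hmem
      · exact h0 ▸ hosc_nonneg f hbdd j
      · exact le_csSup (hbdd j) hmem
    have hsum_le : ∑' j, (osc8 fn j) ^ 2 ≤ S := by
      refine Summable.tsum_le_tsum (fun j => ?_) ?_ hsq
      · have h0 := hosc_nonneg fn hfnbdd j
        exact pow_le_pow_left₀ h0 (hosc_le j) 2
      · refine Summable.of_nonneg_of_le (fun j => sq_nonneg _)
          (fun j => pow_le_pow_left₀ (hosc_nonneg fn hfnbdd j) (hosc_le j) 2) hsq
    have hGn := hGCB n fn hfnm hfnloc hfnbdd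
    have hGn' : ∫ ω, Real.exp (fn ω - ∫ x, fn x ∂μ) ∂μ ≤ Real.exp (C * S) := by
      refine hGn.trans (Real.exp_le_exp.mpr ?_)
      exact mul_le_mul_of_nonneg_left hsum_le hC.le
    -- pointwise comparison
    have hIle : ∫ x, fn x ∂μ ≤ (∫ x, f x ∂μ) + V n := by
      have h1 : ∀ ω, fn ω ≤ f ω + V n := by
        intro ω
        have := hVmem n ω
        have h2 : f (g n ω) - f ω ≤ |f ω - f (g n ω)| := by
          rw [abs_sub_comm]
          exact le_abs_self _
        linarith [this]
      calc ∫ x, fn x ∂μ ≤ ∫ x, (f x + V n) ∂μ :=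
            integral_mono hfnint (hfint.add (integrable_const _)) h1
        _ = (∫ x, f x ∂μ) + V n := by
            rw [integral_add hfint (integrable_const _)]
            simp
    have hpt : ∀ ω, Real.exp (f ω - ∫ x, f x ∂μ) ≤
        Real.exp (2 * V n) * Real.exp (fn ω - ∫ x, fn x ∂μ) := by
      intro ω
      rw [← Real.exp_add, Real.exp_le_exp]
      have h1 : f ω - fn ω ≤ V n := (le_abs_self _).trans (hVmem n ω)
      linarith [hIle]
    -- integrate
    have hIf := ∫ x, f x ∂μ
    have hint1 : Integrable (fun ω => Real.exp (f ω - ∫ x, f x ∂μ)) μ := by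
      refine intbd _ (by fun_prop) (Real.exp (M + |∫ x, f x ∂μ|)) fun ω => ?_
      rw [abs_of_pos (Real.exp_pos _), Real.exp_le_exp]
      have := hbd ω
      have := abs_le.mp (hbd ω)
      have := neg_abs_le (∫ x, f x ∂μ)
      linarith
    have hint2 : Integrable (fun ω => Real.exp (2 * V n) *
        Real.exp (fn ω - ∫ x, fn x ∂μ)) μ := by
      refine intbd _ (by fun_prop) (Real.exp (2 * V n) * Real.exp (M + |∫ x, fn x ∂μ|))
        fun ω => ?_
      rw [abs_of_pos (mul_pos (Real.exp_pos _) (Real.exp_pos _))]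
      refine mul_le_mul_of_nonneg_left ?_ (Real.exp_pos _).le
      rw [Real.exp_le_exp]
      have := abs_le.mp (hfnbd ω)
      have := neg_abs_le (∫ x, fn x ∂μ)
      linarith
    calc ∫ ω, Real.exp (f ω - ∫ x, f x ∂μ) ∂μ
        ≤ ∫ ω, Real.exp (2 * V n) * Real.exp (fn ω - ∫ x, fn x ∂μ) ∂μ :=
          integral_mono hint1 hint2 hpt
      _ = Real.exp (2 * V n) * ∫ ω, Real.exp (fn ω - ∫ x, fn x ∂μ) ∂μ :=
          integral_const_mul _ _
      _ ≤ Real.exp (2 * V n) * Real.exp (C * S) :=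
          mul_le_mul_of_nonneg_left hGn' (Real.exp_pos _).le
      _ = Real.exp (2 * V n + C * S) := (Real.exp_add _ _).symm
  -- pass to the limit
  have hlim : Filter.Tendsto (fun n => Real.exp (2 * V n + C * S)) Filter.atTop
      (nhds (Real.exp (C * S))) := by
    have h1 : Filter.Tendsto (fun n => 2 * V n + C * S) Filter.atTop (nhds (C * S)) := by
      have := (huc.const_mul 2).add_const (C * S)
      simpa using this
    exact (Real.continuous_exp.tendsto _).comp h1
  exact ge_of_tendsto' hlim key
end

section
/- Suppose a probability measure μ on A^{ℕ} (A countable) satisfies a Gaussian concentration bound with constant C. Then for every n ≥ 0, every nonempty F ⊆ A^{n+1} with μ(F) > 0, and every ε > 2√(C log(1/μ(F))/(n+1)), the ε-blowup ⟨F⟩_ε in the normalized Hamming distance satisfies μ(⟨F⟩_ε) ≥ 1 − exp(−((n+1)/(4C)) (ε − 2√(C log(1/μ(F))/(n+1)))²). -/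
set_option maxHeartbeats 2000000


open MeasureTheory

/-- GCB implies a quantitative blowing-up property: for any
`F ⊆ A^{n+1}` of positive measure and any
`ε > 2√(C log(1/μ(F))/(n+1))`, the `ε`-blowup of `F` in the normalized Hamming distance
has measure at least `1 − exp(−((n+1)/(4C))(ε − 2√(C log(1/μ(F))/(n+1)))²)`. -/
theorem stmt_11 {A : Type*} [Countable A] [DecidableEq A]
    [MeasurableSpace A] [MeasurableSingletonClass A]
    (μ : Measure (ℕ → A)) [IsProbabilityMeasure μ] (C : ℝ) (hC : 0 < C)
    (hGCB : ∀ (f : (ℕ → A) → ℝ), Measurable f → ∀ δ : ℕ → ℝ, (∀ j, 0 ≤ δ j) →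
      (∀ (ω : ℕ → A) (j : ℕ) (a b : A),
        |f (Function.update ω j a) - f (Function.update ω j b)| ≤ δ j) →
      (Summable fun j => δ j ^ 2) →
      ∀ θ : ℝ, ∫ ω, Real.exp (θ * (f ω - ∫ x, f x ∂μ)) ∂μ ≤
        Real.exp (C * θ ^ 2 * ∑' j, δ j ^ 2))
    (n : ℕ) (F : Set (Fin (n + 1) → A))
    (E : Set (ℕ → A)) (hE : E = {ω | (fun i : Fin (n + 1) => ω i.1) ∈ F})
    (hpos : 0 < (μ E).toReal)
    (ε : ℝ)
    (hε : 2 * Real.sqrt (C * Real.log (1 / (μ E).toReal) / (n + 1)) < ε) :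
    1 - Real.exp (-((n + 1) / (4 * C)) *
        (ε - 2 * Real.sqrt (C * Real.log (1 / (μ E).toReal) / (n + 1))) ^ 2)
      ≤ (μ {ω | ∃ σ ∈ F,
          (((Finset.univ.filter fun i : Fin (n + 1) => σ i ≠ ω i.1).card : ℝ) / (n + 1))
            ≤ ε}).toReal := by
  classical
  set M : ℝ := (n : ℝ) + 1 with hMdef
  have hM : (0 : ℝ) < M := by positivity
  -- restriction map
  set res : (ℕ → A) → (Fin (n + 1) → A) := fun ω i => ω i.1 with hresdef
  have hres : Measurable res := measurable_pi_lambda _ fun i => measurable_pi_apply _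
  -- F is nonempty
  have hμEpos : μ E ≠ 0 := by
    intro h; rw [h] at hpos; simp at hpos
  have hEne : E.Nonempty := Set.nonempty_iff_ne_empty.2 (by rintro rfl; simp at hμEpos)
  obtain ⟨ω₀, hω₀⟩ := hEne
  have hFne : F.Nonempty := ⟨res ω₀, by rw [hE] at hω₀; exact hω₀⟩
  -- Hamming distance and min distance to F
  set d : (Fin (n + 1) → A) → (Fin (n + 1) → A) → ℕ :=
    fun σ x => (Finset.univ.filter fun i => σ i ≠ x i).card with hddef
  set g : (Fin (n + 1) → A) → ℕ := fun x => sInf {k | ∃ σ ∈ F, d σ x = k} with hgdef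
  have hgmem : ∀ x, ∃ σ ∈ F, d σ x = g x := by
    intro x
    have : ({k | ∃ σ ∈ F, d σ x = k}).Nonempty := by
      obtain ⟨σ, hσ⟩ := hFne; exact ⟨d σ x, σ, hσ, rfl⟩
    exact Nat.sInf_mem this
  have hgle : ∀ x, ∀ σ ∈ F, g x ≤ d σ x := fun x σ hσ => Nat.sInf_le ⟨σ, hσ, rfl⟩
  have hdle : ∀ σ x, d σ x ≤ n + 1 := by
    intro σ x
    calc d σ x ≤ (Finset.univ : Finset (Fin (n + 1))).card := Finset.card_le_card (Finset.filter_subset _ _)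
      _ = n + 1 := by simp
  -- oscillation of d
  have hd_osc : ∀ (σ x y : Fin (n + 1) → A) (j : Fin (n + 1)),
      (∀ i, i ≠ j → x i = y i) → d σ x ≤ d σ y + 1 := by
    intro σ x y j h
    have hsub : (Finset.univ.filter fun i => σ i ≠ x i) ⊆
        insert j (Finset.univ.filter fun i => σ i ≠ y i) := by
      intro i hi
      simp only [Finset.mem_filter, Finset.mem_univ, true_and] at hi
      by_cases hij : i = j
      · simp [hij]
      · rw [h i hij] at hi
        simp [Finset.mem_insert, hij, hi]
    calc d σ x ≤ (insert j (Finset.univ.filter fun i => σ i ≠ y i)).card :=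
          Finset.card_le_card hsub
      _ ≤ d σ y + 1 := Finset.card_insert_le _ _
  have hg_osc : ∀ (x y : Fin (n + 1) → A) (j : Fin (n + 1)),
      (∀ i, i ≠ j → x i = y i) → g x ≤ g y + 1 := by
    intro x y j h
    obtain ⟨σ, hσF, hσ⟩ := hgmem y
    calc g x ≤ d σ x := hgle x σ hσF
      _ ≤ d σ y + 1 := hd_osc σ x y j h
      _ = g y + 1 := by rw [hσ]
  -- the function f
  set f : (ℕ → A) → ℝ := fun ω => (g (res ω) : ℝ) with hfdef
  have hf_meas : Measurable f := (measurable_of_countable fun x => (g x : ℝ)).comp hres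
  have hf_nonneg : ∀ ω, 0 ≤ f ω := fun ω => Nat.cast_nonneg _
  have hf_ub : ∀ ω, f ω ≤ M := by
    intro ω
    obtain ⟨σ, hσF, hσ⟩ := hgmem (res ω)
    have h1 : g (res ω) ≤ n + 1 := hσ ▸ hdle σ (res ω)
    rw [hMdef]
    calc f ω = (g (res ω) : ℝ) := rfl
      _ ≤ (n : ℝ) + 1 := by exact_mod_cast h1
  have hf_int : Integrable f μ := by
    refine ⟨hf_meas.aestronglyMeasurable, HasFiniteIntegral.of_bounded (C := M) ?_⟩
    filter_upwards with ω
    rw [Real.norm_eq_abs, abs_of_nonneg (hf_nonneg ω)]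
    exact hf_ub ω
  set I : ℝ := ∫ x, f x ∂μ with hIdef
  have hI_nonneg : 0 ≤ I := integral_nonneg hf_nonneg
  have hI_ub : I ≤ M := by
    calc I ≤ ∫ _, M ∂μ := integral_mono hf_int (integrable_const M) hf_ub
      _ = M := by simp
  -- integrability of the exponential functionals
  have hexp_int : ∀ θ : ℝ, Integrable (fun ω => Real.exp (θ * (f ω - I))) μ := by
    intro θ
    refine ⟨(((hf_meas.sub measurable_const).const_mul θ).exp).aestronglyMeasurable,
      HasFiniteIntegral.of_bounded (C := Real.exp (|θ| * (M + |I|))) ?_⟩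
    filter_upwards with ω
    rw [Real.norm_eq_abs, abs_of_pos (Real.exp_pos _)]
    apply Real.exp_le_exp.2
    have h1 : |f ω - I| ≤ M + |I| := by
      have := abs_sub_abs_le_abs_sub (f ω) I
      have h2 : |f ω| ≤ M := by rw [abs_of_nonneg (hf_nonneg ω)]; exact hf_ub ω
      calc |f ω - I| ≤ |f ω| + |I| := abs_sub _ _
        _ ≤ M + |I| := by linarith
    calc θ * (f ω - I) ≤ |θ * (f ω - I)| := le_abs_self _
      _ = |θ| * |f ω - I| := abs_mul _ _
      _ ≤ |θ| * (M + |I|) := by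
          apply mul_le_mul_of_nonneg_left h1 (abs_nonneg _)
  -- apply GCB
  set δ : ℕ → ℝ := fun j => if j < n + 1 then 1 else 0 with hδdef
  have hδ_nonneg : ∀ j, 0 ≤ δ j := by intro j; rw [hδdef]; dsimp only; split <;> norm_num
  have hδ_zero : ∀ j ∉ Finset.range (n + 1), δ j ^ 2 = 0 := by
    intro j hj
    rw [Finset.mem_range] at hj
    simp [hδdef, hj]; omega
  have hδ_sum : Summable fun j => δ j ^ 2 := summable_of_ne_finset_zero hδ_zero
  have hδ_tsum : ∑' j, δ j ^ 2 = M := by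
    rw [tsum_eq_sum hδ_zero, hMdef]
    have hone : ∀ j ∈ Finset.range (n + 1), δ j ^ 2 = 1 := by
      intro j hj
      rw [Finset.mem_range] at hj
      simp [hδdef, hj]; omega
    rw [Finset.sum_congr rfl hone]
    simp
  have hf_osc : ∀ (ω : ℕ → A) (j : ℕ) (a b : A),
      |f (Function.update ω j a) - f (Function.update ω j b)| ≤ δ j := by
    intro ω j a b
    by_cases hj : j < n + 1
    · have key : ∀ (u v : A), g (res (Function.update ω j u)) ≤ g (res (Function.update ω j v)) + 1 := by
        intro u v
        apply hg_osc _ _ ⟨j, hj⟩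
        intro i hi
        have hij : i.1 ≠ j := fun h => hi (Fin.ext h)
        simp [hresdef, Function.update, hij]
      have c1 : ((g (res (Function.update ω j a)) : ℝ)) ≤
          (g (res (Function.update ω j b)) : ℝ) + 1 := by exact_mod_cast key a b
      have c2 : ((g (res (Function.update ω j b)) : ℝ)) ≤
          (g (res (Function.update ω j a)) : ℝ) + 1 := by exact_mod_cast key b a
      simp only [hδdef, hfdef]
      rw [if_pos hj, abs_le]
      constructor <;> linarith
    · have heq : ∀ (u : A), res (Function.update ω j u) = res ω := by
        intro u
        funext i
        have hij : i.1 ≠ j := by omega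
        simp [hresdef, Function.update, hij]
      rw [hδdef]; dsimp only; rw [if_neg hj]
      rw [hfdef]; dsimp only
      rw [heq a, heq b]
      simp
  have hG : ∀ θ : ℝ, ∫ ω, Real.exp (θ * (f ω - I)) ∂μ ≤ Real.exp (C * θ ^ 2 * M) := by
    intro θ
    have := hGCB f hf_meas δ hδ_nonneg hf_osc hδ_sum θ
    rw [hδ_tsum] at this
    exact this
  -- E is measurable and f = 0 on E
  have hEmeas : MeasurableSet E := by
    have : E = res ⁻¹' F := by rw [hE]; rfl
    rw [this]
    exact hres (Set.to_countable F).measurableSet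
  have hfE : ∀ ω ∈ E, f ω = 0 := by
    intro ω hω
    rw [hE] at hω
    have h0 : g (res ω) = 0 := by
      have hle := hgle (res ω) (res ω) hω
      have : d (res ω) (res ω) = 0 := by
        rw [hddef]; dsimp only
        rw [Finset.card_eq_zero, Finset.filter_eq_empty_iff]
        intro i _; simp
      omega
    rw [hfdef]; dsimp only; rw [h0]; simp
  set p : ℝ := (μ E).toReal with hpdef
  set L : ℝ := Real.log (1 / p) with hLdef
  have hp1 : p ≤ 1 := by
    rw [hpdef]
    exact ENNReal.toReal_le_of_le_ofReal zero_le_one (by simpa using (prob_le_one (μ := μ) (s := E)))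
  have hL0 : 0 ≤ L := Real.log_nonneg (by rw [le_div_iff₀ hpos]; linarith)
  -- Step A: bound on the mean
  have hA : ∀ t : ℝ, 0 < t → t * I ≤ C * t ^ 2 * M + L := by
    intro t ht
    have h1 := hG (-t)
    have h2 : p * Real.exp (t * I) ≤ ∫ ω, Real.exp (-t * (f ω - I)) ∂μ := by
      have e1 : ∫ _ω in E, Real.exp (t * I) ∂μ = p * Real.exp (t * I) := by
        rw [setIntegral_const]; rw [hpdef]; rw [smul_eq_mul]; rfl
      have e2 : ∫ ω in E, Real.exp (t * I) ∂μ = ∫ ω in E, Real.exp (-t * (f ω - I)) ∂μ := by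
        apply setIntegral_congr_fun hEmeas
        intro ω hω
        dsimp only
        rw [hfE ω hω]
        ring_nf
      rw [← e1, e2]
      exact setIntegral_le_integral (hexp_int (-t)) (Filter.Eventually.of_forall fun ω => (Real.exp_pos _).le)
    have h3 : p * Real.exp (t * I) ≤ Real.exp (C * t ^ 2 * M) := by
      refine le_trans h2 (le_trans h1 ?_)
      apply Real.exp_le_exp.2
      nlinarith [sq_nonneg t]
    have h4 : Real.exp (t * I) ≤ Real.exp (C * t ^ 2 * M) / p := by
      rw [le_div_iff₀ hpos]
      linarith [h3, mul_comm p (Real.exp (t * I))]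
    have h5 := Real.log_le_log (Real.exp_pos _) h4
    rw [Real.log_exp, Real.log_div (Real.exp_ne_zero _) (ne_of_gt hpos), Real.log_exp] at h5
    have h6 : L = -Real.log p := by rw [hLdef, one_div, Real.log_inv]
    linarith
  have hIbound : I ≤ 2 * Real.sqrt (C * M * L) := by
    rcases eq_or_lt_of_le hL0 with hL | hL
    · -- L = 0
      have hI0 : I ≤ 0 := by
        by_contra h
        push_neg at h
        have ht : 0 < I / (2 * C * M) := by positivity
        have hAI := hA _ ht
        rw [← hL] at hAI
        have e1 : I / (2 * C * M) * I = I ^ 2 / (2 * (C * M)) := by ring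
        have e2 : C * (I / (2 * C * M)) ^ 2 * M = I ^ 2 / (4 * (C * M)) := by
          field_simp
          ring
        rw [e1, e2, add_zero, div_le_div_iff₀ (by positivity) (by positivity)] at hAI
        nlinarith [mul_pos h h, mul_pos hC hM]
      have : Real.sqrt (C * M * L) = 0 := by rw [← hL]; simp
      rw [this]; linarith
    · set t : ℝ := Real.sqrt (L / (C * M)) with htdef
      have ht : 0 < t := Real.sqrt_pos.2 (by positivity)
      have ht2 : t ^ 2 = L / (C * M) := Real.sq_sqrt (by positivity)
      set u : ℝ := Real.sqrt (C * M * L) with hudef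
      have hu0 : 0 ≤ u := Real.sqrt_nonneg _
      have hu2 : u ^ 2 = C * M * L := Real.sq_sqrt (by positivity)
      have htu : t * u = L := by
        rw [htdef, hudef, ← Real.sqrt_mul (by positivity)]
        have : L / (C * M) * (C * M * L) = L ^ 2 := by field_simp
        rw [this, Real.sqrt_sq hL0]
      have hAt := hA t ht
      have hCt : C * t ^ 2 * M = L := by
        rw [ht2]
        field_simp
      rw [hCt] at hAt
      have : t * I ≤ t * (2 * u) := by rw [mul_comm t (2*u)] at *; nlinarith
      exact le_of_mul_le_mul_left (by linarith [this]) ht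
  -- relate the two sqrt expressions
  set B : ℝ := Real.sqrt (C * Real.log (1 / (μ E).toReal) / (n + 1)) with hBdef
  have hBL : B = Real.sqrt (C * L / M) := by rw [hBdef, hLdef, hpdef, hMdef]
  have hMB : M * B = Real.sqrt (C * M * L) := by
    rw [hBL]
    rw [show M * Real.sqrt (C * L / M) = Real.sqrt (M ^ 2) * Real.sqrt (C * L / M) by
      rw [Real.sqrt_sq hM.le]]
    rw [← Real.sqrt_mul (by positivity)]
    congr 1
    field_simp
  have hI2MB : I ≤ 2 * (M * B) := by rw [hMB]; exact hIbound
  set s : ℝ := ε - 2 * B with hsdef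
  have hs : 0 < s := by rw [hsdef]; linarith [hε]
  set r : ℝ := M * ε - I with hrdef
  have hrs : M * s ≤ r := by rw [hrdef, hsdef]; nlinarith
  have hr0 : 0 < r := lt_of_lt_of_le (by positivity) hrs
  set θ : ℝ := r / (2 * C * M) with hθdef
  have hθpos : 0 < θ := by positivity
  -- the blow-up set and its complement
  set T : Set (ℕ → A) := {ω | ∃ σ ∈ F,
    (((Finset.univ.filter fun i : Fin (n + 1) => σ i ≠ ω i.1).card : ℝ) / (n + 1)) ≤ ε} with hTdef
  have hTmeas : MeasurableSet T := by
    have : T = res ⁻¹' {x | ∃ σ ∈ F, ((d σ x : ℝ) / (n + 1)) ≤ ε} := rfl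
    rw [this]
    exact hres (Set.to_countable _).measurableSet
  have hcomp_lb : ∀ ω ∈ Tᶜ, M * ε < f ω := by
    intro ω hω
    rw [Set.mem_compl_iff, hTdef, Set.mem_setOf_eq] at hω
    push_neg at hω
    obtain ⟨σ, hσF, hσ⟩ := hgmem (res ω)
    have hlt : ε < ((d σ (res ω) : ℝ)) / ((n : ℝ) + 1) := hω σ hσF
    rw [lt_div_iff₀ (by positivity : (0:ℝ) < (n:ℝ) + 1)] at hlt
    have hgf : f ω = (d σ (res ω) : ℝ) := by
      show ((g (res ω) : ℝ)) = _
      rw [hσ]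
    rw [hgf, hMdef]
    linarith
  -- Markov bound on the complement
  have hmark : (μ Tᶜ).toReal ≤ Real.exp (-(r ^ 2) / (4 * C * M)) := by
    have hle1 : ∫ _ω in Tᶜ, Real.exp (θ * r) ∂μ ≤ ∫ ω in Tᶜ, Real.exp (θ * (f ω - I)) ∂μ := by
      apply setIntegral_mono_on
      · exact integrableOn_const (measure_lt_top μ _).ne
      · exact (hexp_int θ).integrableOn
      · exact hTmeas.compl
      · intro ω hω
        apply Real.exp_le_exp.2
        apply mul_le_mul_of_nonneg_left _ hθpos.le
        have := hcomp_lb ω hω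
        rw [hrdef]
        linarith
    rw [setIntegral_const, smul_eq_mul] at hle1
    have hle2 : (μ Tᶜ).toReal * Real.exp (θ * r) ≤ Real.exp (C * θ ^ 2 * M) :=
      le_trans hle1 (le_trans (setIntegral_le_integral (hexp_int θ)
        (Filter.Eventually.of_forall fun ω => (Real.exp_pos _).le)) (hG θ))
    have hle3 : (μ Tᶜ).toReal ≤ Real.exp (C * θ ^ 2 * M) / Real.exp (θ * r) := by
      rw [le_div_iff₀ (Real.exp_pos _)]
      exact hle2
    rw [← Real.exp_sub] at hle3
    have hexp_eq : C * θ ^ 2 * M - θ * r = -(r ^ 2) / (4 * C * M) := by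
      rw [hθdef]; field_simp; ring
    rwa [hexp_eq] at hle3
  have hexp_mono : Real.exp (-(r ^ 2) / (4 * C * M)) ≤
      Real.exp (-((n : ℝ) + 1) / (4 * C) * s ^ 2) := by
    apply Real.exp_le_exp.2
    have h4CM : (0:ℝ) < 4 * C * M := by positivity
    have hr2 : (M * s) ^ 2 ≤ r ^ 2 := by nlinarith [hrs, mul_pos hM hs]
    calc -(r ^ 2) / (4 * C * M) ≤ -((M * s) ^ 2) / (4 * C * M) := by
          apply (div_le_div_iff_of_pos_right h4CM).2
          linarith
      _ = -M / (4 * C) * s ^ 2 := by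
          field_simp
      _ = -((n : ℝ) + 1) / (4 * C) * s ^ 2 := by rw [hMdef]
  -- conclude
  have hcompl : (μ T).toReal = 1 - (μ Tᶜ).toReal := by
    have h1 : μ Tᶜ = 1 - μ T := prob_compl_eq_one_sub hTmeas
    have h2 : (μ Tᶜ).toReal = 1 - (μ T).toReal := by
      rw [h1, ENNReal.toReal_sub_of_le prob_le_one ENNReal.one_ne_top, ENNReal.toReal_one]
    linarith
  have hfinal : (μ Tᶜ).toReal ≤ Real.exp (-((n : ℝ) + 1) / (4 * C) * s ^ 2) :=
    le_trans hmark hexp_mono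
  have hgoal_exp : Real.exp (-((n : ℝ) + 1) / (4 * C) * s ^ 2) =
      Real.exp (-((n + 1) / (4 * C)) * (ε - 2 * B) ^ 2) := by
    rw [hsdef]; ring_nf
  rw [hcompl]
  rw [hgoal_exp] at hfinal
  rw [hBdef] at hfinal
  linarith
end

section
/- If a probability measure μ satisfies GCB with constant C, then for every n ≥ 0 and every F ⊆ A^{n+1}, the function f(ω) = inf_{σ ∈ F} ∑_{i=0}^n 1_{σ_i ≠ ω_i} satisfies E_μ[f] ≤ 2√(C(n+1) log(1/μ(F))). -/
open MeasureTheory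

/-- Under GCB with constant `C`, the (unnormalized) Hamming distance to a set
`F ⊆ A^{n+1}`, `f(ω) = inf_{σ ∈ F} #{i : σ_i ≠ ω_i}`, has expectation at most
`2√(C(n+1) log(1/μ(F)))`. -/
theorem stmt_12 {A : Type*} [Countable A] [DecidableEq A]
    [MeasurableSpace A] [MeasurableSingletonClass A]
    (μ : Measure (ℕ → A)) [IsProbabilityMeasure μ] (C : ℝ) (hC : 0 < C)
    (hGCB : ∀ (f : (ℕ → A) → ℝ), Measurable f → ∀ δ : ℕ → ℝ, (∀ j, 0 ≤ δ j) →
      (∀ (ω : ℕ → A) (j : ℕ) (a b : A),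
        |f (Function.update ω j a) - f (Function.update ω j b)| ≤ δ j) →
      (Summable fun j => δ j ^ 2) →
      ∀ θ : ℝ, ∫ ω, Real.exp (θ * (f ω - ∫ x, f x ∂μ)) ∂μ ≤
        Real.exp (C * θ ^ 2 * ∑' j, δ j ^ 2))
    (n : ℕ) (F : Set (Fin (n + 1) → A)) (hF : F.Nonempty)
    (E : Set (ℕ → A)) (hE : E = {ω | (fun i : Fin (n + 1) => ω i.1) ∈ F})
    (hpos : 0 < (μ E).toReal)
    (f : (ℕ → A) → ℝ)
    (hf : ∀ ω, f ω = sInf {t : ℝ | ∃ σ ∈ F,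
      t = ((Finset.univ.filter fun i : Fin (n + 1) => σ i ≠ ω i.1).card : ℝ)}) :
    ∫ ω, f ω ∂μ ≤ 2 * Real.sqrt (C * (n + 1) * Real.log (1 / (μ E).toReal)) := by
  classical
  -- notation
  set S : (ℕ → A) → Set ℝ := fun ω => {t : ℝ | ∃ σ ∈ F,
      t = ((Finset.univ.filter fun i : Fin (n + 1) => σ i ≠ ω i.1).card : ℝ)} with hS
  have hSne : ∀ ω, (S ω).Nonempty := by
    obtain ⟨σ₀, hσ₀⟩ := hF
    exact fun ω => ⟨_, σ₀, hσ₀, rfl⟩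
  have hSbdd : ∀ ω, BddBelow (S ω) := by
    intro ω
    refine ⟨0, fun t ht => ?_⟩
    obtain ⟨σ, _, rfl⟩ := ht
    positivity
  have hf0 : ∀ ω, 0 ≤ f ω := by
    intro ω; rw [hf]
    exact le_csInf (hSne ω) (fun t ht => by obtain ⟨σ, _, rfl⟩ := ht; positivity)
  have hfle : ∀ ω, f ω ≤ n + 1 := by
    intro ω; rw [hf]
    obtain ⟨σ₀, hσ₀⟩ := hF
    refine csInf_le_of_le (hSbdd ω) ⟨σ₀, hσ₀, rfl⟩ ?_
    have : (Finset.univ.filter fun i : Fin (n + 1) => σ₀ i ≠ ω i.1).card ≤ n + 1 := by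
      calc (Finset.univ.filter fun i : Fin (n + 1) => σ₀ i ≠ ω i.1).card
          ≤ (Finset.univ : Finset (Fin (n + 1))).card := Finset.card_filter_le _ _
        _ = n + 1 := by simp
    exact_mod_cast this
  -- f vanishes on E
  have hfE : ∀ ω ∈ E, f ω = 0 := by
    intro ω hω
    refine le_antisymm ?_ (hf0 ω)
    rw [hf]
    rw [hE] at hω
    refine csInf_le_of_le (hSbdd ω) ⟨_, hω, rfl⟩ ?_
    simp
  -- Lipschitz bound
  set δ : ℕ → ℝ := fun j => if j < n + 1 then 1 else 0 with hδdef
  have hδ0 : ∀ j, 0 ≤ δ j := fun j => by by_cases h : j < n + 1 <;> simp [hδdef, h] <;> split_ifs <;> norm_num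
  have hδsq : ∀ j, δ j ^ 2 = δ j := fun j => by by_cases h : j < n + 1 <;> simp [hδdef, h]
  have hδsum : Summable fun j => δ j ^ 2 := by
    apply summable_of_ne_finset_zero (s := Finset.range (n + 1))
    intro j hj
    simp only [Finset.mem_range] at hj
    simp [hδsq, hδdef, hj]; omega
  have htsum : ∑' j, δ j ^ 2 = (n + 1 : ℝ) := by
    rw [tsum_eq_sum (s := Finset.range (n + 1))
      (by intro j hj; simp only [Finset.mem_range] at hj; simp [hδsq, hδdef, hj]; omega)]
    have hone : ∀ j ∈ Finset.range (n + 1), δ j ^ 2 = 1 := fun j hj => by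
      simp only [Finset.mem_range] at hj; simp [hδsq, hδdef, hj]; omega
    rw [Finset.sum_congr rfl hone]
    simp
  -- distance comparison for one-coordinate changes
  have hd : ∀ (ω ω' : ℕ → A) (j : ℕ), (∀ k, k ≠ j → ω k = ω' k) → ∀ σ : Fin (n + 1) → A,
      ((Finset.univ.filter fun i : Fin (n + 1) => σ i ≠ ω i.1).card : ℝ) ≤
      ((Finset.univ.filter fun i : Fin (n + 1) => σ i ≠ ω' i.1).card : ℝ) + δ j := by
    intro ω ω' j hagree σ
    by_cases hj : j < n + 1
    · set j' : Fin (n + 1) := ⟨j, hj⟩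
      have herase : (Finset.univ.filter fun i : Fin (n + 1) => σ i ≠ ω i.1).erase j' =
          (Finset.univ.filter fun i : Fin (n + 1) => σ i ≠ ω' i.1).erase j' := by
        ext i
        simp only [Finset.mem_erase, Finset.mem_filter, Finset.mem_univ, true_and]
        constructor <;> rintro ⟨hij, hne⟩ <;> refine ⟨hij, ?_⟩
        · rwa [← hagree i.1 (fun h => hij (Fin.ext h))]
        · rwa [hagree i.1 (fun h => hij (Fin.ext h))]
      have hsub : (Finset.univ.filter fun i : Fin (n + 1) => σ i ≠ ω i.1) ⊆
          insert j' ((Finset.univ.filter fun i : Fin (n + 1) => σ i ≠ ω' i.1).erase j') := by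
        rw [Finset.subset_insert_iff, herase]
      have := Finset.card_le_card hsub
      have h2 : (insert j' ((Finset.univ.filter fun i : Fin (n + 1) => σ i ≠ ω' i.1).erase j')).card ≤
          (Finset.univ.filter fun i : Fin (n + 1) => σ i ≠ ω' i.1).card + 1 :=
        (Finset.card_insert_le _ _).trans (Nat.add_le_add_right Finset.card_erase_le 1)
      have hcard : (Finset.univ.filter fun i : Fin (n + 1) => σ i ≠ ω i.1).card ≤
          (Finset.univ.filter fun i : Fin (n + 1) => σ i ≠ ω' i.1).card + 1 :=
        this.trans h2
      simp only [hδdef, if_pos hj]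
      exact_mod_cast hcard
    · have heq : (Finset.univ.filter fun i : Fin (n + 1) => σ i ≠ ω i.1) =
          (Finset.univ.filter fun i : Fin (n + 1) => σ i ≠ ω' i.1) := by
        apply Finset.filter_congr
        intro i _
        rw [hagree i.1 (fun h => absurd (h ▸ i.2) (by omega))]
      simp [hδdef, hj, heq, show ¬ j ≤ n by omega]
  have hflip : ∀ (ω ω' : ℕ → A) (j : ℕ), (∀ k, k ≠ j → ω k = ω' k) →
      f ω ≤ f ω' + δ j := by
    intro ω ω' j hagree
    rw [hf ω, hf ω', ← sub_le_iff_le_add]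
    apply le_csInf (hSne ω')
    rintro t ⟨σ, hσ, rfl⟩
    rw [sub_le_iff_le_add]
    exact (csInf_le (hSbdd ω) ⟨σ, hσ, rfl⟩).trans (hd ω ω' j hagree σ)
  have hLip : ∀ (ω : ℕ → A) (j : ℕ) (a b : A),
      |f (Function.update ω j a) - f (Function.update ω j b)| ≤ δ j := by
    intro ω j a b
    have hag : ∀ k, k ≠ j → Function.update ω j a k = Function.update ω j b k := by
      intro k hk; simp [Function.update_of_ne hk]
    rw [abs_sub_le_iff]
    constructor
    · linarith [hflip (Function.update ω j a) (Function.update ω j b) j hag]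
    · linarith [hflip (Function.update ω j b) (Function.update ω j a) j (fun k hk => (hag k hk).symm)]
  -- measurability
  have hπ : Measurable (fun ω : ℕ → A => fun i : Fin (n + 1) => ω i.1) :=
    measurable_pi_lambda _ (fun i => measurable_pi_apply i.1)
  have hfmeas : Measurable f := by
    have : f = (fun v : Fin (n + 1) → A => sInf {t : ℝ | ∃ σ ∈ F,
        t = ((Finset.univ.filter fun i : Fin (n + 1) => σ i ≠ v i).card : ℝ)}) ∘
        (fun ω : ℕ → A => fun i : Fin (n + 1) => ω i.1) := by
      funext ω; rw [hf]; rfl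
    rw [this]
    exact (measurable_of_countable _).comp hπ
  have hEmeas : MeasurableSet E := by
    rw [hE]
    exact hπ (Set.Countable.measurableSet (Set.to_countable F))
  set m : ℝ := ∫ x, f x ∂μ with hm
  set L : ℝ := Real.log (1 / (μ E).toReal) with hL
  have hμle : (μ E).toReal ≤ 1 := by
    have := prob_le_one (μ := μ) (s := E)
    exact ENNReal.toReal_le_of_le_ofReal one_pos.le (by simpa using this)
  have hLnn : 0 ≤ L := Real.log_nonneg (one_le_one_div hpos hμle)
  -- key inequality
  have key : ∀ t : ℝ, 0 < t → m ≤ C * (n + 1) * t + L / t := by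
    intro t ht
    have hgcb := hGCB f hfmeas δ hδ0 hLip hδsum (-t)
    rw [htsum] at hgcb
    -- integrability of exp(-t * f)
    have hint : Integrable (fun ω => Real.exp (-t * f ω)) μ := by
      refine (integrable_const (1 : ℝ)).mono' ?_ ?_
      · exact ((hfmeas.const_mul (-t)).exp).aestronglyMeasurable
      · filter_upwards with ω
        rw [Real.norm_eq_abs, abs_of_pos (Real.exp_pos _)]
        exact Real.exp_le_one_iff.2 (by nlinarith [hf0 ω])
    -- μ(E) ≤ ∫ exp(-t f)
    have hlow : (μ E).toReal ≤ ∫ ω, Real.exp (-t * f ω) ∂μ := by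
      have h1 : ∫ ω in E, Real.exp (-t * f ω) ∂μ = (μ E).toReal := by
        rw [setIntegral_congr_fun hEmeas (g := fun _ => (1:ℝ))
          (fun x hx => by simp [hfE x hx])]
        simp [Measure.real]
      rw [← h1]
      exact setIntegral_le_integral hint
        (Filter.Eventually.of_forall (fun ω => (Real.exp_pos _).le))
    -- relate to the GCB bound
    have hsplit : ∫ ω, Real.exp (-t * (f ω - m)) ∂μ =
        (∫ ω, Real.exp (-t * f ω) ∂μ) * Real.exp (t * m) := by
      rw [← integral_mul_const]
      congr 1
      funext ω
      rw [← Real.exp_add]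
      ring_nf
    have hup : (∫ ω, Real.exp (-t * f ω) ∂μ) * Real.exp (t * m) ≤
        Real.exp (C * t ^ 2 * (n + 1)) := by
      rw [← hsplit]
      simpa using hgcb
    have hμ' : (μ E).toReal * Real.exp (t * m) ≤ Real.exp (C * t ^ 2 * (n + 1)) :=
      le_trans (by nlinarith [Real.exp_pos (t * m)]) hup
    have hlog : Real.log ((μ E).toReal) + t * m ≤ C * t ^ 2 * (n + 1) := by
      have := Real.log_le_log (by positivity) hμ'
      rwa [Real.log_mul (ne_of_gt hpos) (Real.exp_ne_zero _), Real.log_exp,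
        Real.log_exp] at this
    have hLlog : L = -Real.log ((μ E).toReal) := by
      rw [hL, one_div, Real.log_inv]
    have hmt : m * t ≤ C * t ^ 2 * (n + 1) + L := by rw [hLlog]; linarith
    calc m = (m * t) / t := by field_simp
    _ ≤ (C * t ^ 2 * (n + 1) + L) / t := (div_le_div_iff_of_pos_right ht).2 hmt
    _ = C * (n + 1) * t + L / t := by field_simp
  -- optimize
  rcases eq_or_lt_of_le hLnn with hL0 | hLpos
  · have : m ≤ 0 := by
      refine le_of_forall_pos_le_add (fun ε hε => ?_)
      have ht : (0:ℝ) < ε / (C * (n + 1)) := by positivity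
      have := key _ ht
      rw [← hL0] at this
      calc m ≤ C * (n + 1) * (ε / (C * (n + 1))) + 0 / (ε / (C * (n + 1))) := this
      _ = ε := by field_simp; ring
      _ ≤ 0 + ε := by linarith
    calc m ≤ 0 := this
    _ ≤ 2 * Real.sqrt (C * (n + 1) * L) := by positivity
  · set t₀ : ℝ := Real.sqrt (L / (C * (n + 1))) with ht₀
    have hCn : (0:ℝ) < C * (n + 1) := by positivity
    have ht₀pos : 0 < t₀ := Real.sqrt_pos.2 (by positivity)
    have hkey := key t₀ ht₀pos
    have hsq : t₀ ^ 2 = L / (C * (n + 1)) := Real.sq_sqrt (by positivity)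
    have hprod : t₀ * Real.sqrt (C * (n + 1) * L) = L := by
      rw [ht₀, ← Real.sqrt_mul (by positivity)]
      rw [show L / (C * (n + 1)) * (C * (n + 1) * L) = L ^ 2 by field_simp]
      exact Real.sqrt_sq hLpos.le
    have h1 : C * (n + 1) * t₀ * t₀ = L := by
      have h := hsq
      rw [pow_two] at h
      rw [mul_assoc, h]
      field_simp
    have : m * t₀ ≤ 2 * L := by
      have := mul_le_mul_of_nonneg_right hkey ht₀pos.le
      calc m * t₀ ≤ (C * (n + 1) * t₀ + L / t₀) * t₀ := this
      _ = C * (n + 1) * t₀ * t₀ + L := by field_simp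
      _ = 2 * L := by rw [h1]; ring
    have h2 : (2 * Real.sqrt (C * (n + 1) * L)) * t₀ = 2 * L := by
      rw [mul_comm (2 * _) t₀, ← mul_assoc, mul_comm t₀ 2, mul_assoc, hprod]
    have := this.trans_eq h2.symm
    exact le_of_mul_le_mul_right this ht₀pos
end
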